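/- In U(sl_2) with standard generators H, E, F ([H,E]=2E, [H,F]=−2F, [E,F]=H), define for t ∈ ℂ the formal operator p(t; H,E,F) = Σ_{k≥0} F^k E^k (1/k!) Π_{j=0}^{k−1} 1/(t−H−j). Let L_m be the irreducible (m+1)-dimensional sl_2-module with basis v^m_0,…,v^m_m where H v^m_k = (m−2k) v^m_k, F v^m_k = (k+1) v^m_{k+1}, E v^m_k = (m−k+1) v^m_{k−1}. Then for λ = l ω_1 with l ∈ ℤ_{≥0} and any k, p((λ,α_1^∨); H,E,F) v^m_k = [ ((λ,α_1^∨)+2)((λ,α_1^∨)+3)···((λ,α_1^∨)+k+1) / ( ((λ,α_1^∨)−m+k+1)((λ,α_1^∨)−m+k+2)···((λ,α_1^∨)−m+2k) ) ] v^m_k, i.e. the operator acts diagonally with the stated eigenvalues (interpreted as rational functions of (λ,α_1^∨) = l). -/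

import Mathlib

/- STATEMENT 6: action of p(t;H,E,F) on the basis v^m_k of the irreducible
(m+1)-dimensional sl₂-module L_m, realized concretely as Fin (m+1) → ℂ with
H, E, F given by their matrices in the basis v^m_0, …, v^m_m. -/

open scoped BigOperators

noncomputable section

/-- Matrix of `H` on `L_m`: `H v_k = (m - 2k) v_k`. -/
def Hmat (m : ℕ) : Matrix (Fin (m+1)) (Fin (m+1)) ℂ :=
  Matrix.diagonal fun k => (m : ℂ) - 2 * (k : ℕ)

/-- Matrix of `E` on `L_m`: `E v_k = (m - k + 1) v_{k-1}`. -/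
def Emat (m : ℕ) : Matrix (Fin (m+1)) (Fin (m+1)) ℂ :=
  Matrix.of fun j k => if (k : ℕ) = (j : ℕ) + 1 then (m : ℂ) - (j : ℕ) else 0

/-- Matrix of `F` on `L_m`: `F v_k = (k+1) v_{k+1}`. -/
def Fmat (m : ℕ) : Matrix (Fin (m+1)) (Fin (m+1)) ℂ :=
  Matrix.of fun j k => if (j : ℕ) = (k : ℕ) + 1 then ((j : ℕ) : ℂ) else 0

/-- The operator `p(t; H, E, F) = Σ_k F^k E^k (1/k!) Π_{j=0}^{k-1} (t - H - j)⁻¹`.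
On `L_m` the series truncates (terms with `k > m` vanish since `E^{m+1} = 0`). -/
def pMat (m : ℕ) (t : ℂ) (H E F : Matrix (Fin (m+1)) (Fin (m+1)) ℂ) :
    Matrix (Fin (m+1)) (Fin (m+1)) ℂ :=
  ∑ k ∈ Finset.range (m + 2),
    ((Nat.factorial k : ℂ))⁻¹ •
      (F ^ k * E ^ k *
        ((List.range k).map fun j =>
          Ring.inverse (t • (1 : Matrix (Fin (m+1)) (Fin (m+1)) ℂ) - H - (j : ℂ) • 1)).prod)

section AuxLemmas
open Matrix Finset

lemma flatMap_sing {α β : Type*} (l : List α) (g : α → β) :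
    (l.flatMap fun a => [g a]) = l.map g := by
  induction l with
  | nil => rfl
  | cons a l ih => simp [ih]

lemma vand (u v : ℂ) : ∀ k : ℕ, ∑ i ∈ Finset.range (k+1),
    (Nat.choose k i : ℂ) * ((∏ r ∈ Finset.range i, (u + r)) * ∏ r ∈ Finset.range (k - i), (v + r))
    = ∏ r ∈ Finset.range k, (u + v + r) := by
  intro k
  induction k with
  | zero => simp
  | succ k ih =>
    rw [Finset.prod_range_succ, ← ih, Finset.sum_range_succ' _ (k+1)]
    have h1 : ∀ i ∈ Finset.range (k+1),
        (Nat.choose (k+1) (i+1) : ℂ) * ((∏ r ∈ Finset.range (i+1), (u + r)) * ∏ r ∈ Finset.range (k - i), (v + r))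
        = (Nat.choose k i : ℂ) * ((∏ r ∈ Finset.range (i+1), (u + r)) * ∏ r ∈ Finset.range (k - i), (v + r))
          + (Nat.choose k (i+1) : ℂ) * ((∏ r ∈ Finset.range (i+1), (u + r)) * ∏ r ∈ Finset.range (k - i), (v + r)) := by
      intro i _
      rw [Nat.choose_succ_succ]
      push_cast
      ring
    simp only [Nat.succ_sub_succ_eq_sub]
    rw [Finset.sum_congr rfl h1, Finset.sum_add_distrib]
    have h4 : (∑ i ∈ Finset.range (k+1), (Nat.choose k (i+1) : ℂ) * ((∏ r ∈ Finset.range (i+1), (u + r)) * ∏ r ∈ Finset.range (k - i), (v + r)))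
        + (Nat.choose (k+1) 0 : ℂ) * ((∏ r ∈ Finset.range 0, (u + r)) * ∏ r ∈ Finset.range (k+1-0), (v + r))
        = ∑ i ∈ Finset.range (k+1), (Nat.choose k i : ℂ) * ((∏ r ∈ Finset.range i, (u + r)) * ∏ r ∈ Finset.range (k+1 - i), (v + r)) := by
      have := (Finset.sum_range_succ' (fun i => (Nat.choose k i : ℂ) * ((∏ r ∈ Finset.range i, (u + r)) * ∏ r ∈ Finset.range (k+1 - i), (v + r))) (k+1)).symm
      simp only [Nat.succ_sub_succ_eq_sub] at this
      rw [show ((Nat.choose (k+1) 0 : ℂ)) = (Nat.choose k 0 : ℂ) by simp]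
      rw [this, Finset.sum_range_succ]
      simp [Nat.choose_succ_self]
    rw [add_assoc, h4, ← Finset.sum_add_distrib, Finset.sum_mul]
    refine Finset.sum_congr rfl fun i hi => ?_
    simp only [Finset.mem_range] at hi
    have hik : i ≤ k := by omega
    have h6 : k + 1 - i = (k - i) + 1 := by omega
    rw [h6, Finset.prod_range_succ, Finset.prod_range_succ]
    have h7 : ((k - i : ℕ) : ℂ) = (k : ℂ) - i := by push_cast [Nat.cast_sub hik]; ring
    rw [h7]; ring


-- reflection helper
lemma prod_reflect (c : ℂ) (n : ℕ) :
    ∏ j ∈ Finset.range n, (c - (j:ℕ)) = ∏ j ∈ Finset.range n, (c - (n:ℂ) + 1 + (j:ℕ)) := by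
  rw [← Finset.prod_range_reflect (fun j : ℕ => c - (j:ℕ)) n]
  refine Finset.prod_congr rfl fun j hj => ?_
  simp only [Finset.mem_range] at hj
  have h2 : n - 1 - j = n - (1+j) := by omega
  rw [h2, Nat.cast_sub (by omega)]
  push_cast
  ring

lemma nat_prod (kk : ℕ) : ∀ i : ℕ, i ≤ kk →
    (∏ r ∈ Finset.range i, (kk - i + 1 + r)) = kk.descFactorial i := by
  intro i
  induction i with
  | zero => simp
  | succ i ih =>
    intro h
    have h1 : ∀ j ∈ Finset.range i, (kk - (i+1) + 1 + (j+1)) = kk - i + 1 + j :=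
      fun j hj => by omega
    rw [Finset.prod_range_succ' (fun j => kk - (i+1) + 1 + j) i,
      Finset.prod_congr rfl h1, ih (by omega), Nat.descFactorial_succ]
    have h0 : kk - (i+1) + 1 + 0 = kk - i := by omega
    rw [h0, mul_comm]


lemma scalar_id (m kk : ℕ) (t : ℂ) (hk : kk ≤ m)
    (hden : ∀ j ∈ Finset.range kk, t - (m:ℂ) + kk + 1 + (j:ℕ) ≠ 0) :
    ∑ i ∈ Finset.range (kk+1), ((Nat.factorial i : ℂ))⁻¹ *
      ((∏ j ∈ Finset.range i, (t - ((m:ℂ) - 2*(kk:ℕ)) - (j:ℕ))⁻¹) *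
        ((∏ r ∈ Finset.range i, ((m:ℂ) - ((kk-i:ℕ):ℂ) - (i:ℕ) + 1 + (r:ℕ))) *
          (∏ r ∈ Finset.range i, (((kk-i:ℕ):ℂ) + 1 + (r:ℕ)))))
    = (∏ j ∈ Finset.range kk, (t + 2 + (j:ℕ))) /
        (∏ j ∈ Finset.range kk, (t - (m:ℂ) + kk + 1 + (j:ℕ))) := by
  set x : ℂ := t - m + 2*kk with hxdef
  -- nonvanishing of x - j for j < kk
  have hx : ∀ j : ℕ, j < kk → x - j ≠ 0 := by
    intro j hj
    have h := hden (kk-1-j) (Finset.mem_range.mpr (by omega))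
    have e : ((kk-1-j:ℕ):ℂ) = (kk:ℂ) - 1 - j := by
      have h2 : kk-1-j = kk - (1+j) := by omega
      rw [h2, Nat.cast_sub (by omega)]; push_cast; ring
    rw [e] at h
    intro hc
    apply h
    rw [hxdef] at hc
    linear_combination hc
  -- rewrite the denominator
  have hPden : ∏ j ∈ Finset.range kk, (t - (m:ℂ) + kk + 1 + (j:ℕ))
      = ∏ j ∈ Finset.range kk, (x - (j:ℕ)) := by
    rw [prod_reflect x kk]
    refine Finset.prod_congr rfl fun j _ => ?_
    rw [hxdef]; ring
  have hP : (∏ j ∈ Finset.range kk, (x - (j:ℕ))) ≠ 0 :=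
    Finset.prod_ne_zero_iff.mpr fun j hj => hx j (Finset.mem_range.mp hj)
  rw [hPden, eq_div_iff hP, Finset.sum_mul]
  have key : ∀ i ∈ Finset.range (kk+1),
      (((Nat.factorial i : ℂ))⁻¹ *
        ((∏ j ∈ Finset.range i, (t - ((m:ℂ) - 2*(kk:ℕ)) - (j:ℕ))⁻¹) *
          ((∏ r ∈ Finset.range i, ((m:ℂ) - ((kk-i:ℕ):ℂ) - (i:ℕ) + 1 + (r:ℕ))) *
            (∏ r ∈ Finset.range i, (((kk-i:ℕ):ℂ) + 1 + (r:ℕ)))))) *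
        (∏ j ∈ Finset.range kk, (x - (j:ℕ)))
      = (Nat.choose kk i : ℂ) *
          ((∏ r ∈ Finset.range i, (((m:ℂ) - kk + 1) + r)) *
            ∏ r ∈ Finset.range (kk - i), ((x - kk + 1) + r)) := by
    intro i hi
    simp only [Finset.mem_range] at hi
    have hikk : i ≤ kk := by omega
    -- B product = i! * choose
    have hB : (∏ r ∈ Finset.range i, (((kk-i:ℕ):ℂ) + 1 + (r:ℕ)))
        = (Nat.factorial i : ℂ) * (Nat.choose kk i : ℂ) := by
      have := nat_prod kk i hikk
      calc (∏ r ∈ Finset.range i, (((kk-i:ℕ):ℂ) + 1 + (r:ℕ)))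
          = ((∏ r ∈ Finset.range i, (kk - i + 1 + r) : ℕ) : ℂ) := by push_cast; rfl
        _ = ((kk.descFactorial i : ℕ) : ℂ) := by rw [this]
        _ = _ := by rw [Nat.descFactorial_eq_factorial_mul_choose]; push_cast; ring
    -- A product
    have hA : (∏ r ∈ Finset.range i, ((m:ℂ) - ((kk-i:ℕ):ℂ) - (i:ℕ) + 1 + (r:ℕ)))
        = ∏ r ∈ Finset.range i, (((m:ℂ) - kk + 1) + r) := by
      refine Finset.prod_congr rfl fun r _ => ?_
      rw [Nat.cast_sub hikk]; ring
    -- D product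
    have hD : (∏ j ∈ Finset.range i, (t - ((m:ℂ) - 2*(kk:ℕ)) - (j:ℕ))⁻¹)
        = (∏ j ∈ Finset.range i, (x - (j:ℕ)))⁻¹ := by
      rw [← Finset.prod_inv_distrib]
      refine Finset.prod_congr rfl fun j _ => ?_
      rw [hxdef]; ring
    -- split the big product
    have hsplit : (∏ j ∈ Finset.range kk, (x - (j:ℕ)))
        = (∏ j ∈ Finset.range i, (x - (j:ℕ))) *
            ∏ j ∈ Finset.range (kk - i), ((x - kk + 1) + (j:ℕ)) := by
      have h3 := Finset.prod_range_add (fun j : ℕ => x - (j:ℕ)) i (kk - i)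
      rw [show i + (kk - i) = kk by omega] at h3
      rw [h3]
      congr 1
      have h4 : ∀ j ∈ Finset.range (kk-i), x - ((i + j : ℕ):ℂ) = (x - (i:ℕ)) - (j:ℕ) :=
        fun j _ => by push_cast; ring
      rw [Finset.prod_congr rfl h4, prod_reflect (x - (i:ℕ)) (kk - i)]
      refine Finset.prod_congr rfl fun j _ => ?_
      rw [Nat.cast_sub hikk]; ring
    have hDP : (∏ j ∈ Finset.range i, (x - (j:ℕ)))⁻¹ * (∏ j ∈ Finset.range kk, (x - (j:ℕ)))
        = ∏ j ∈ Finset.range (kk - i), ((x - kk + 1) + (j:ℕ)) := by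
      rw [hsplit, ← mul_assoc, inv_mul_cancel₀
        (Finset.prod_ne_zero_iff.mpr fun j hj => hx j (by simp only [Finset.mem_range] at hj; omega)), one_mul]
    have hfac : ((Nat.factorial i : ℂ)) ≠ 0 := Nat.cast_ne_zero.mpr (Nat.factorial_ne_zero i)
    calc (((Nat.factorial i : ℂ))⁻¹ *
        ((∏ j ∈ Finset.range i, (t - ((m:ℂ) - 2*(kk:ℕ)) - (j:ℕ))⁻¹) *
          ((∏ r ∈ Finset.range i, ((m:ℂ) - ((kk-i:ℕ):ℂ) - (i:ℕ) + 1 + (r:ℕ))) *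
            (∏ r ∈ Finset.range i, (((kk-i:ℕ):ℂ) + 1 + (r:ℕ)))))) *
        (∏ j ∈ Finset.range kk, (x - (j:ℕ)))
        = ((Nat.factorial i : ℂ)⁻¹ * ((Nat.factorial i : ℂ) * (Nat.choose kk i : ℂ))) *
            ((∏ r ∈ Finset.range i, (((m:ℂ) - kk + 1) + r)) *
              ((∏ j ∈ Finset.range i, (x - (j:ℕ)))⁻¹ * (∏ j ∈ Finset.range kk, (x - (j:ℕ))))) := by
          rw [hB, hA, hD]; ring
      _ = (Nat.choose kk i : ℂ) *
          ((∏ r ∈ Finset.range i, (((m:ℂ) - kk + 1) + r)) *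
            ∏ r ∈ Finset.range (kk - i), ((x - kk + 1) + r)) := by
          rw [hDP, inv_mul_cancel_left₀ hfac]
  rw [Finset.sum_congr rfl key, vand ((m:ℂ) - kk + 1) (x - kk + 1) kk]
  refine Finset.prod_congr rfl fun r _ => ?_
  rw [hxdef]; ring


lemma Emul0 (m : ℕ) (c : ℂ) :
    (Emat m) *ᵥ Pi.single (⟨0, Nat.succ_pos m⟩ : Fin (m+1)) c = 0 := by
  ext i
  simp [Matrix.mulVec_single, Emat]

lemma single_mul_smul (m : ℕ) (j : Fin (m+1)) (c : ℂ) :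
    (Pi.single j (c * 1) : Fin (m+1) → ℂ) = c • (Pi.single j 1 : Fin (m+1) → ℂ) := by
  ext x
  simp [Pi.single_apply]

lemma EmulS (m a : ℕ) (h : a + 1 < m + 1) (c : ℂ) :
    (Emat m) *ᵥ Pi.single (⟨a+1, h⟩ : Fin (m+1)) c
      = Pi.single (⟨a, by omega⟩ : Fin (m+1)) (((m : ℂ) - a) * c) := by
  ext i
  simp only [Matrix.mulVec_single, Emat, Matrix.of_apply, Pi.single_apply, Fin.ext_iff]
  by_cases hi : (i : ℕ) = a
  · simp [hi]
  · have : ¬ (a + 1 = (i:ℕ) + 1) := by omega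
    simp [hi, this, Ne.symm hi]

lemma FmulS (m a : ℕ) (h : a + 1 < m + 1) (c : ℂ) :
    (Fmat m) *ᵥ Pi.single (⟨a, by omega⟩ : Fin (m+1)) c
      = Pi.single (⟨a+1, h⟩ : Fin (m+1)) (((a : ℂ) + 1) * c) := by
  ext i
  simp only [Matrix.mulVec_single, Fmat, Matrix.of_apply, Pi.single_apply, Fin.ext_iff]
  by_cases hi : (i : ℕ) = a + 1
  · simp [hi]; ring
  · simp [hi]

lemma prod_shift (c : ℂ) (n : ℕ) :
    ∏ r ∈ Finset.range (n+1), (c + (r:ℕ)) = c * ∏ r ∈ Finset.range n, (c + 1 + (r:ℕ)) := by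
  rw [Finset.prod_range_succ' (fun r => c + (r:ℕ)) n]
  rw [Finset.prod_congr rfl (fun r _ => by push_cast; ring :
    ∀ r ∈ Finset.range n, c + ((r+1:ℕ):ℂ) = c + 1 + (r:ℕ))]
  push_cast
  ring

lemma EpowVec (m : ℕ) : ∀ (i b : ℕ) (h : b + i < m + 1),
    (Emat m ^ i) *ᵥ Pi.single (⟨b + i, h⟩ : Fin (m+1)) (1 : ℂ)
      = (∏ r ∈ Finset.range i, ((m : ℂ) - b - i + 1 + r)) •
          (Pi.single (⟨b, by omega⟩ : Fin (m+1)) 1 : Fin (m+1) → ℂ) := by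
  intro i
  induction i with
  | zero =>
    intro b h
    rw [pow_zero, Matrix.one_mulVec, Finset.range_zero, Finset.prod_empty, one_smul]
    congr 1
  | succ i ih =>
    intro b h
    rw [pow_succ, ← Matrix.mulVec_mulVec]
    have e1 : (⟨b + (i+1), h⟩ : Fin (m+1)) = ⟨(b+i)+1, by omega⟩ := by
      simp [Fin.ext_iff]; omega
    rw [e1, EmulS m (b+i) (by omega), single_mul_smul, Matrix.mulVec_smul,
      ih b (by omega), smul_smul]
    congr 1
    have hcan : (∏ r ∈ Finset.range (i+1), ((m:ℂ) - (b:ℕ) - ((i+1 : ℕ):ℂ) + 1 + (r:ℕ)))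
        = ∏ r ∈ Finset.range (i+1), (((m:ℂ) - (b:ℕ) - (i:ℕ)) + (r:ℕ)) :=
      Finset.prod_congr rfl fun r _ => by push_cast; ring
    rw [hcan, prod_shift]
    push_cast
    ring

lemma EpowVec0 (m : ℕ) : ∀ (a : ℕ) (i : ℕ) (ha : a < m + 1), a < i →
    (Emat m ^ i) *ᵥ Pi.single (⟨a, ha⟩ : Fin (m+1)) (1 : ℂ) = 0 := by
  intro a
  induction a with
  | zero =>
    intro i ha hi
    obtain ⟨i, rfl⟩ : ∃ j, i = j + 1 := ⟨i - 1, by omega⟩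
    rw [pow_succ, ← Matrix.mulVec_mulVec, Emul0]
    simp
  | succ a ih =>
    intro i ha hi
    obtain ⟨i, rfl⟩ : ∃ j, i = j + 1 := ⟨i - 1, by omega⟩
    rw [pow_succ, ← Matrix.mulVec_mulVec, EmulS m a ha, single_mul_smul,
      Matrix.mulVec_smul, ih i (by omega) (by omega), smul_zero]

lemma FpowVec (m : ℕ) : ∀ (i b : ℕ) (h : b + i < m + 1),
    (Fmat m ^ i) *ᵥ Pi.single (⟨b, by omega⟩ : Fin (m+1)) (1 : ℂ)
      = (∏ r ∈ Finset.range i, ((b : ℂ) + 1 + r)) •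
          (Pi.single (⟨b + i, h⟩ : Fin (m+1)) 1 : Fin (m+1) → ℂ) := by
  intro i
  induction i with
  | zero =>
    intro b h
    rw [pow_zero, Matrix.one_mulVec, Finset.range_zero, Finset.prod_empty, one_smul]
    congr 1
  | succ i ih =>
    intro b h
    rw [pow_succ', ← Matrix.mulVec_mulVec, ih b (by omega), Matrix.mulVec_smul,
      FmulS m (b+i) (by omega)]
    rw [show (⟨b+i+1, by omega⟩ : Fin (m+1)) = ⟨b+(i+1), h⟩ by simp [Fin.ext_iff]; omega]
    rw [single_mul_smul, smul_smul, Finset.prod_range_succ]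
    congr 1
    push_cast
    ring


lemma sum_mulVec {n' : Type*} [Fintype n'] [DecidableEq n'] (s : Finset ℕ)
    (f : ℕ → Matrix n' n' ℂ) (v : n' → ℂ) :
    (∑ i ∈ s, f i) *ᵥ v = ∑ i ∈ s, (f i *ᵥ v) := by
  induction s using Finset.cons_induction with
  | empty => simp [Matrix.zero_mulVec]
  | cons a s ha ih => simp [Finset.sum_insert ha, Matrix.add_mulVec, ih]

lemma ring_inverse_pi {n' : Type*} [Fintype n'] (d : n' → ℂ) (hd : ∀ s, d s ≠ 0) :
    Ring.inverse d = fun s => (d s)⁻¹ := by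
  let u : (n' → ℂ)ˣ := ⟨d, fun s => (d s)⁻¹,
    by ext s; simp [mul_inv_cancel₀ (hd s)],
    by ext s; simp [inv_mul_cancel₀ (hd s)]⟩
  show Ring.inverse (u : n' → ℂ) = _
  rw [Ring.inverse_unit u]
  rfl

lemma Dfactor (m : ℕ) (t : ℂ) (j : ℕ)
    (hg : ∀ s : Fin (m+1), t - ((m:ℂ) - 2*(s:ℕ)) - j ≠ 0) :
    Ring.inverse (t • (1 : Matrix (Fin (m+1)) (Fin (m+1)) ℂ) - Hmat m - (j:ℂ) • 1)
      = Matrix.diagonal (fun s : Fin (m+1) => (t - ((m:ℂ) - 2*(s:ℕ)) - j)⁻¹) := by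
  have hd : t • (1 : Matrix (Fin (m+1)) (Fin (m+1)) ℂ) - Hmat m - (j:ℂ) • 1
      = Matrix.diagonal (fun s : Fin (m+1) => t - ((m:ℂ) - 2*(s:ℕ)) - j) := by
    ext a b
    by_cases h : a = b <;>
      simp [Hmat, Matrix.one_apply, Matrix.diagonal, h]
  rw [hd, ← Matrix.nonsing_inv_eq_ringInverse, Matrix.inv_diagonal,
    ring_inverse_pi _ hg]

lemma Dprod (m : ℕ) (t : ℂ)
    (hg : ∀ s : Fin (m+1), ∀ j ∈ Finset.range (m+2), t - ((m:ℂ) - 2*(s:ℕ)) - (j:ℕ) ≠ 0) :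
    ∀ i, i ≤ m + 1 →
    ((List.range i).map fun j : ℕ =>
        Ring.inverse (t • (1 : Matrix (Fin (m+1)) (Fin (m+1)) ℂ) - Hmat m - (j : ℂ) • 1)).prod
      = Matrix.diagonal (fun s : Fin (m+1) => ∏ j ∈ Finset.range i, (t - ((m:ℂ) - 2*(s:ℕ)) - j)⁻¹) := by
  intro i
  induction i with
  | zero => intro _; simp [Matrix.diagonal_one]
  | succ i ih =>
    intro hi
    rw [List.range_succ, List.map_append, List.prod_append, ih (by omega)]
    simp only [List.map_cons, List.map_nil, List.prod_cons, List.prod_nil, mul_one]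
    rw [Dfactor m t i (fun s => hg s i (Finset.mem_range.mpr (by omega))),
      Matrix.diagonal_mul_diagonal]
    refine congrArg Matrix.diagonal (funext fun s => ?_)
    exact (Finset.prod_range_succ (fun j : ℕ => (t - ((m:ℂ) - 2*(s:ℕ)) - j)⁻¹) i).symm

end AuxLemmas

/-- The basis vector `v^m_k` of `L_m`. -/
def vvec (m : ℕ) (k : Fin (m+1)) : Fin (m+1) → ℂ := Pi.single k 1

/-- `p((λ,α₁^∨); H,E,F) v^m_k
  = [ ((λ,α₁^∨)+2)⋯((λ,α₁^∨)+k+1) / ( ((λ,α₁^∨)-m+k+1)⋯((λ,α₁^∨)-m+2k) ) ] v^m_k`,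
as rational functions of `t = (λ,α₁^∨)`, i.e. for every `t` avoiding the poles. -/
theorem stmt6 (m : ℕ) (k : Fin (m+1)) (t : ℂ)
    (hgen : ∀ s : Fin (m+1), ∀ j ∈ Finset.range (m + 2),
      t - ((m : ℂ) - 2 * (s : ℕ)) - (j : ℕ) ≠ 0)
    (hden : ∀ j ∈ Finset.range (k : ℕ), t - (m : ℂ) + (k : ℕ) + 1 + (j : ℕ) ≠ 0) :
    Matrix.mulVec (pMat m t (Hmat m) (Emat m) (Fmat m)) (vvec m k) =
      ((∏ j ∈ Finset.range (k : ℕ), (t + 2 + (j : ℕ))) /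
        (∏ j ∈ Finset.range (k : ℕ), (t - (m : ℂ) + (k : ℕ) + 1 + (j : ℕ)))) • vvec m k := by
  have hk : (k : ℕ) < m + 1 := k.isLt
  unfold pMat
  rw [sum_mulVec]
  have hterm : ∀ i ∈ Finset.range (m+2),
      (((Nat.factorial i : ℂ))⁻¹ •
        (Fmat m ^ i * Emat m ^ i *
          ((List.range i).map fun j =>
            Ring.inverse (t • (1 : Matrix (Fin (m+1)) (Fin (m+1)) ℂ) - Hmat m
              - (j : ℂ) • 1)).prod)).mulVec (vvec m k)
      = (if i ≤ (k : ℕ) then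
          ((Nat.factorial i : ℂ))⁻¹ *
            ((∏ j ∈ Finset.range i, (t - ((m:ℂ) - 2*((k:ℕ):ℕ)) - (j:ℕ))⁻¹) *
              ((∏ r ∈ Finset.range i, ((m:ℂ) - (((k:ℕ)-i:ℕ):ℂ) - (i:ℕ) + 1 + (r:ℕ))) *
                (∏ r ∈ Finset.range i, ((((k:ℕ)-i:ℕ):ℂ) + 1 + (r:ℕ)))))
        else 0) • vvec m k := by
    intro i hi
    simp only [Finset.mem_range] at hi
    rw [Matrix.smul_mulVec, ← Matrix.mulVec_mulVec, ← Matrix.mulVec_mulVec]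
    simp only [List.pure_def, List.bind_eq_flatMap, flatMap_sing, List.map_map]
    rw [show ((fun j : ℂ => Ring.inverse (t • (1 : Matrix (Fin (m+1)) (Fin (m+1)) ℂ) - Hmat m - j • 1)) ∘ fun a : ℕ => ((a:ℕ):ℂ))
        = fun j : ℕ => Ring.inverse (t • (1 : Matrix (Fin (m+1)) (Fin (m+1)) ℂ) - Hmat m - ((j:ℕ):ℂ) • 1) from rfl]
    rw [Dprod m t hgen i (by omega)]
    unfold vvec
    rw [show k = (⟨(k:ℕ), hk⟩ : Fin (m+1)) from Fin.ext rfl]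
    rw [Matrix.diagonal_mulVec_single, single_mul_smul]
    simp only [Matrix.mulVec_smul]
    by_cases hik : i ≤ (k : ℕ)
    · rw [if_pos hik]
      rw [show (⟨(k:ℕ), hk⟩ : Fin (m+1)) = ⟨((k:ℕ) - i) + i, by omega⟩ from Fin.mk_eq_mk.mpr (by omega)]
      rw [EpowVec m i ((k:ℕ) - i) (by omega)]
      simp only [Matrix.mulVec_smul]
      rw [FpowVec m i ((k:ℕ) - i) (by omega)]
      simp only [smul_smul]
    · rw [if_neg hik]
      rw [EpowVec0 m (k:ℕ) i hk (by omega)]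
      simp
  rw [Finset.sum_congr rfl hterm, ← Finset.sum_smul]
  have hsum : (∑ i ∈ Finset.range (m+2), (if i ≤ (k : ℕ) then
          ((Nat.factorial i : ℂ))⁻¹ *
            ((∏ j ∈ Finset.range i, (t - ((m:ℂ) - 2*((k:ℕ):ℕ)) - (j:ℕ))⁻¹) *
              ((∏ r ∈ Finset.range i, ((m:ℂ) - (((k:ℕ)-i:ℕ):ℂ) - (i:ℕ) + 1 + (r:ℕ))) *
                (∏ r ∈ Finset.range i, ((((k:ℕ)-i:ℕ):ℂ) + 1 + (r:ℕ)))))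
        else 0))
      = ∑ i ∈ Finset.range ((k:ℕ)+1),
          ((Nat.factorial i : ℂ))⁻¹ *
            ((∏ j ∈ Finset.range i, (t - ((m:ℂ) - 2*((k:ℕ):ℕ)) - (j:ℕ))⁻¹) *
              ((∏ r ∈ Finset.range i, ((m:ℂ) - (((k:ℕ)-i:ℕ):ℂ) - (i:ℕ) + 1 + (r:ℕ))) *
                (∏ r ∈ Finset.range i, ((((k:ℕ)-i:ℕ):ℂ) + 1 + (r:ℕ))))) := by
    rw [← Finset.sum_subset (Finset.range_subset_range.mpr (by omega : (k:ℕ)+1 ≤ m+2))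
      (fun x _ hx => if_neg (fun hc => hx (Finset.mem_range.mpr (by omega))))]
    exact Finset.sum_congr rfl fun i hi => if_pos (by
      simp only [Finset.mem_range] at hi; omega)
  rw [hsum, scalar_id m (k:ℕ) t (by omega) hden]

end
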